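/- Let C be an (n+2)-angulated category with Oppermann–Thomas cluster tilting object X, and let X₀ → X₁ → ⋯ → Xₙ → M →^β ΣⁿX₀ be an (n+2)-angle with all Xᵢ ∈ add X. If the map Hom(X, Σ⁻ⁿM) → Hom(X, X₀) induced by (−1)ⁿΣ⁻ⁿβ is non-zero, then the factorization ideal I_M of End(ΣⁿX) is non-zero. -/

import Mathlib

open CategoryTheory CategoryTheory.Limits

/-- `Y` belongs to `add X`: it is a direct summand of a finite direct sum of copies
of `X`. -/
def InAdd {C : Type} [Category C] [Preadditive C] [HasFiniteBiproducts C]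
    (X Y : C) : Prop :=
  ∃ (m : ℕ) (i : Y ⟶ ⨁ fun _ : Fin m => X) (r : (⨁ fun _ : Fin m => X) ⟶ Y),
    i ≫ r = 𝟙 Y

/-- `M` is indecomposable: non-zero, and its only idempotent endomorphisms are `0`
and `𝟙 M`. -/
def Indec {C : Type} [Category C] [Preadditive C] (M : C) : Prop :=
  ¬ IsZero M ∧ ∀ e : M ⟶ M, e ≫ e = e → e = 0 ∨ e = 𝟙 M

/-- An `(n+2)`-`Σⁿ`-sequence `A₀ → A₁ → ⋯ → A_{n+1} → Σⁿ A₀` in `C`, where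
`S = Σⁿ` is the `n`-suspension functor. -/
structure NAngle {C : Type} [Category C] (S : C ⥤ C) (n : ℕ) where
  obj : Fin (n + 2) → C
  map : ∀ i : Fin (n + 1), obj i.castSucc ⟶ obj i.succ
  mapLast : obj (Fin.last (n + 1)) ⟶ S.obj (obj ⟨0, by omega⟩)

/-- A morphism of `(n+2)`-`Σⁿ`-sequences. -/
structure NAngleHom {C : Type} [Category C] {S : C ⥤ C} {n : ℕ}
    (T T' : NAngle S n) where
  hom : ∀ i : Fin (n + 2), T.obj i ⟶ T'.obj i
  comm : ∀ i : Fin (n + 1), T.map i ≫ hom i.succ = hom i.castSucc ≫ T'.map i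
  commLast : T.mapLast ≫ S.map (hom ⟨0, by omega⟩) = hom (Fin.last (n + 1)) ≫ T'.mapLast

/-- `(C, Σⁿ, Θ)` is an `(n+2)`-angulated category (we record the axioms of
Geiss–Keller–Oppermann used here: consecutive morphisms of an `(n+2)`-angle
compose to zero, every morphism extends to an `(n+2)`-angle (N1), and morphisms of
`(n+2)`-angles can be completed from their first two components (N3)). -/
structure IsNAngulated {C : Type} [Category C] [Preadditive C] (S : C ⥤ C) (n : ℕ)
    (Θ : Set (NAngle S n)) : Prop where
  comp_zero : ∀ T ∈ Θ, ∀ i : Fin n, T.map i.castSucc ≫ T.map i.succ = 0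
  comp_last_zero : ∀ T ∈ Θ, T.map (Fin.last n) ≫ T.mapLast = 0
  extend : ∀ {A₀ A₁ : C} (f : A₀ ⟶ A₁), ∃ T ∈ Θ,
    ∃ (e₀ : A₀ ≅ T.obj ⟨0, by omega⟩) (e₁ : A₁ ≅ T.obj ⟨1, by omega⟩),
      e₀.hom ≫ T.map ⟨0, by omega⟩ = f ≫ e₁.hom
  complete : ∀ T ∈ Θ, ∀ T' ∈ Θ,
    ∀ (φ₀ : T.obj ⟨0, by omega⟩ ⟶ T'.obj ⟨0, by omega⟩)
      (φ₁ : T.obj ⟨1, by omega⟩ ⟶ T'.obj ⟨1, by omega⟩),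
      T.map ⟨0, by omega⟩ ≫ φ₁ = φ₀ ≫ T'.map ⟨0, by omega⟩ →
      ∃ φ : NAngleHom T T', φ.hom ⟨0, by omega⟩ = φ₀ ∧ φ.hom ⟨1, by omega⟩ = φ₁

/-- `X` is an Oppermann–Thomas cluster tilting object: `Hom(X, ΣⁿX) = 0` and every
object of `C` fits into an `(n+2)`-angle `X₀ → X₁ → ⋯ → Xₙ → C' → ΣⁿX₀` with all
`Xᵢ ∈ add X`. -/
structure IsOTClusterTilting {C : Type} [Category C] [Preadditive C]
    [HasFiniteBiproducts C] (S : C ⥤ C) (n : ℕ) (Θ : Set (NAngle S n))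
    (X : C) : Prop where
  vanish : ∀ f : X ⟶ S.obj X, f = 0
  resolve : ∀ M : C, ∃ T ∈ Θ, (∀ i : Fin (n + 1), InAdd X (T.obj i.castSucc)) ∧
    Nonempty (T.obj (Fin.last (n + 1)) ≅ M)

/-- The hom-group `X ⟶ M` as a right module over `Γ = End X`, i.e. a left module
over `(End X)ᵐᵒᵖ`, with action given by precomposition. -/
instance homModule {C : Type} [Category C] [Preadditive C] (X M : C) :
    Module (End X)ᵐᵒᵖ (X ⟶ M) where
  smul γ f := γ.unop ≫ f
  one_smul f := Category.id_comp f
  mul_smul γ δ f := by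
    show (γ.unop ≫ δ.unop) ≫ f = γ.unop ≫ δ.unop ≫ f
    simp
  smul_zero γ := by show γ.unop ≫ (0 : X ⟶ M) = 0; simp
  smul_add γ f g := by show γ.unop ≫ (f + g) = γ.unop ≫ f + γ.unop ≫ g; simp
  add_smul γ δ f := by
    show (MulOpposite.unop (γ + δ)) ≫ f = γ.unop ≫ f + δ.unop ≫ f; simp
  zero_smul f := by show MulOpposite.unop (0 : (End X)ᵐᵒᵖ) ≫ f = 0; simp

/-- The `(End X)ᵐᵒᵖ`-linear map `Hom(X, A) → Hom(X, B)` induced by postcomposition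
with `φ : A ⟶ B`. -/
def homMap {C : Type} [Category C] [Preadditive C] (X : C) {A B : C} (φ : A ⟶ B) :
    (X ⟶ A) →ₗ[(End X)ᵐᵒᵖ] (X ⟶ B) where
  toFun f := f ≫ φ
  map_add' f g := by simp
  map_smul' γ f := by
    show (γ.unop ≫ f) ≫ φ = γ.unop ≫ f ≫ φ
    simp

/-- `M` has projective dimension at most `m` over the ring `R`. -/
def ProjDimLE (R : Type) [Ring R] : ℕ → (M : Type) → [AddCommGroup M] → [Module R M] → Prop
  | 0, M, _, _ => Module.Projective R M
  | (m+1), M, _, _ => ∃ (P : Type) (_ : AddCommGroup P) (_ : Module R P)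
      (f : P →ₗ[R] M), Module.Projective R P ∧ Function.Surjective f ∧
      ProjDimLE R m (LinearMap.ker f)

/-- The factorization ideal `I_M` of `End(ΣⁿX)`, consisting of the endomorphisms of
`ΣⁿX` factoring through `add M`, is non-zero. -/
def FactIdealNonzero {C : Type} [Category C] [Preadditive C] [HasFiniteBiproducts C]
    (S : C ⥤ C) (X M : C) : Prop :=
  ∃ (N : C) (_ : InAdd M N) (a : S.obj X ⟶ N) (b : N ⟶ S.obj X), a ≫ b ≠ 0

/-- Let C be an (n+2)-angulated category with Oppermann–Thomas cluster tilting
object X, and let X₀ → X₁ → ⋯ → Xₙ → M →^β ΣⁿX₀ be an (n+2)-angle with all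
Xᵢ ∈ add X. If the map Hom(X, Σ⁻ⁿM) → Hom(X, X₀) induced by (−1)ⁿΣ⁻ⁿβ is non-zero,
then the factorization ideal I_M of End(ΣⁿX) is non-zero. Here M is the last
object of the angle T and β = T.mapLast. -/
theorem stmt_11 {C : Type} [Category C] [Preadditive C] [HasFiniteBiproducts C]
    (n : ℕ) (e : C ≌ C) (Θ : Set (NAngle e.functor n))
    (hC : IsNAngulated e.functor n Θ)
    (X : C) (hX : IsOTClusterTilting e.functor n Θ X)
    (T : NAngle e.functor n) (hT : T ∈ Θ)
    (hadd : ∀ i : Fin (n + 1), InAdd X (T.obj i.castSucc))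
    (hne : ∃ g : X ⟶ e.inverse.obj (T.obj (Fin.last (n + 1))),
      ((-1 : ℤ) ^ n) •
        (g ≫ e.inverse.map T.mapLast ≫ e.unitIso.inv.app (T.obj ⟨0, by omega⟩)) ≠ 0) :
    FactIdealNonzero e.functor X (T.obj (Fin.last (n + 1))) := by
  obtain ⟨g, hg⟩ := hne
  have hhne : g ≫ e.inverse.map T.mapLast ≫ e.unitIso.inv.app (T.obj ⟨0, by omega⟩) ≠ 0 := by
    intro h0
    rw [h0, smul_zero] at hg
    exact hg rfl
  set h := g ≫ e.inverse.map T.mapLast ≫ e.unitIso.inv.app (T.obj ⟨0, by omega⟩) with hh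
  obtain ⟨m, i, r, hir⟩ : InAdd X (T.obj ⟨0, by omega⟩) := hadd 0
  -- find a component on which h ≫ i is nonzero
  have hi : ¬ ∀ k : Fin m, (h ≫ i) ≫ biproduct.π (fun _ : Fin m => X) k = 0 := by
    intro hall
    have h1 : h ≫ i = 0 := biproduct.hom_ext _ _ (by simpa using hall)
    apply hhne
    calc h = (h ≫ i) ≫ r := by rw [Category.assoc, hir]; exact (Category.comp_id h).symm
    _ = 0 := by rw [h1, zero_comp]
  push_neg at hi
  obtain ⟨k, hk⟩ := hi
  refine ⟨T.obj (Fin.last (n + 1)),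
    ⟨1, biproduct.lift (fun _ => 𝟙 _), biproduct.π _ 0, by simp⟩,
    e.functor.map g ≫ e.counit.app _, T.mapLast ≫ e.functor.map (i ≫ biproduct.π _ k), ?_⟩
  have key : e.functor.map g ≫ e.counit.app (T.obj (Fin.last (n + 1))) ≫ T.mapLast
      = e.functor.map h := by
    have nat := e.counit.naturality T.mapLast
    simp only [Functor.id_map, Functor.comp_map] at nat
    rw [hh]
    simp only [Functor.map_comp]
    rw [← nat]
    simp
    rw [Equivalence.counit_app_functor]
  intro hzero
  have h2 : e.functor.map h ≫ e.functor.map i ≫ e.functor.map (biproduct.π (fun _ : Fin m => X) k) = 0 := by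
    rw [← key]
    rw [← Functor.map_comp]; simpa only [Category.assoc] using hzero
  exact hk (e.functor.map_injective (by rw [Functor.map_comp, Functor.map_comp, Category.assoc, h2, Functor.map_zero]))
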